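/- Let {X_n} be Banach spaces, U a free ultrafilter on ℕ, and T_n ∈ L(X_n) uniformly bounded. Then v((T_n)_U) = lim_U v(T_n): the numerical radius is exactly preserved by the ultraproduct construction. -/

import Mathlib

open Filter Metric ENNReal

noncomputable def nradius {E : Type*} [SeminormedAddCommGroup E] [NormedSpace ℝ E]
    (T : E →L[ℝ] E) : ℝ :=
  sSup {r : ℝ | ∃ (x : E) (f : E →L[ℝ] ℝ), ‖x‖ = 1 ∧ ‖f‖ = 1 ∧ f x = 1 ∧ r = |f (T x)|}

noncomputable def nindex (E : Type*) [SeminormedAddCommGroup E] [NormedSpace ℝ E] : ℝ :=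
  sInf {r : ℝ | ∃ T : E →L[ℝ] E, ‖T‖ = 1 ∧ r = nradius T}

noncomputable def nullIdeal (X : ℕ → Type*) [∀ n, NormedAddCommGroup (X n)]
    [∀ n, NormedSpace ℝ (X n)] (U : Ultrafilter ℕ) : Submodule ℝ (lp X ∞) where
  carrier := {f | Tendsto (fun n => ‖f n‖) (U : Filter ℕ) (nhds 0)}
  zero_mem' := by
    simpa using (tendsto_const_nhds : Tendsto (fun _ : ℕ => (0 : ℝ)) (U : Filter ℕ) (nhds 0))
  add_mem' := by
    intro f g hf hg
    have h := hf.add hg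
    rw [add_zero] at h
    refine squeeze_zero (fun n => norm_nonneg _) (fun n => ?_) h
    simpa using norm_add_le (f n) (g n)
  smul_mem' := by
    intro c f hf
    have h := hf.const_mul ‖c‖
    rw [mul_zero] at h
    refine squeeze_zero (fun n => norm_nonneg _) (fun n => ?_) h
    simp [norm_smul]

section Aux

variable {E : Type*} [SeminormedAddCommGroup E] [NormedSpace ℝ E]

lemma nradius_bddAbove (T : E →L[ℝ] E) :
    BddAbove {r : ℝ | ∃ (x : E) (f : E →L[ℝ] ℝ), ‖x‖ = 1 ∧ ‖f‖ = 1 ∧ f x = 1 ∧ r = |f (T x)|} := by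
  refine ⟨‖T‖, ?_⟩
  rintro r ⟨x, f, hx, hf, hfx, rfl⟩
  calc |f (T x)| = ‖f (T x)‖ := (Real.norm_eq_abs _).symm
    _ ≤ ‖f‖ * ‖T x‖ := f.le_opNorm _
    _ ≤ ‖f‖ * (‖T‖ * ‖x‖) := mul_le_mul_of_nonneg_left (T.le_opNorm x) (norm_nonneg f)
    _ = ‖T‖ := by rw [hx, hf]; ring

lemma abs_le_nradius (T : E →L[ℝ] E) {x : E} {f : E →L[ℝ] ℝ}
    (hx : ‖x‖ = 1) (hf : ‖f‖ = 1) (hfx : f x = 1) : |f (T x)| ≤ nradius T :=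
  le_csSup (nradius_bddAbove T) ⟨x, f, hx, hf, hfx, rfl⟩

lemma nradius_nonneg (T : E →L[ℝ] E) : 0 ≤ nradius T := by
  apply Real.sSup_nonneg
  rintro r ⟨x, f, hx, hf, hfx, rfl⟩
  exact abs_nonneg _

lemma nradius_le_norm (T : E →L[ℝ] E) : nradius T ≤ max ‖T‖ 0 := by
  apply Real.sSup_le _ (le_max_right _ _)
  rintro r ⟨x, f, hx, hf, hfx, rfl⟩
  refine le_max_of_le_left ?_
  calc |f (T x)| = ‖f (T x)‖ := (Real.norm_eq_abs _).symm
    _ ≤ ‖f‖ * ‖T x‖ := f.le_opNorm _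
    _ ≤ ‖f‖ * (‖T‖ * ‖x‖) := mul_le_mul_of_nonneg_left (T.le_opNorm x) (norm_nonneg f)
    _ = ‖T‖ := by rw [hx, hf]; ring

lemma nradius_neg (T : E →L[ℝ] E) : nradius (-T) = nradius T := by
  unfold nradius
  congr 1
  ext r
  constructor <;> rintro ⟨x, f, hx, hf, hfx, rfl⟩ <;>
    exact ⟨x, f, hx, hf, hfx, by simp⟩

end Aux

section Aux2

variable {E : Type*} [NormedAddCommGroup E] [NormedSpace ℝ E]

lemma nradius_lower (T : E →L[ℝ] E) {α : ℝ} (hα : 0 ≤ α) (y : E) :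
    (1 - α * nradius T) * ‖y‖ ≤ ‖y + α • T y‖ := by
  rcases eq_or_ne y 0 with hy0 | hy0
  · simp [hy0]
  · have hy : ‖y‖ ≠ 0 := norm_ne_zero_iff.2 hy0
    obtain ⟨f, hf1, hfy⟩ := exists_dual_vector ℝ y hy
    have hfyr : f y = ‖y‖ := by exact_mod_cast hfy
    have hxnorm : ‖(‖y‖⁻¹ • y)‖ = 1 := by
      rw [norm_smul, norm_inv, norm_norm, inv_mul_cancel₀ hy]
    have hfx : f (‖y‖⁻¹ • y) = 1 := by
      rw [map_smul, smul_eq_mul, hfyr]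
      exact inv_mul_cancel₀ hy
    have hkey : |f (T (‖y‖⁻¹ • y))| ≤ nradius T := abs_le_nradius T hxnorm hf1 hfx
    have hsc : f (T (‖y‖⁻¹ • y)) = ‖y‖⁻¹ * f (T y) := by
      rw [map_smul, map_smul]; rfl
    rw [hsc, abs_mul, abs_inv, abs_norm] at hkey
    have hTy : |f (T y)| ≤ nradius T * ‖y‖ := by
      have hpos : 0 < ‖y‖ := lt_of_le_of_ne (norm_nonneg _) (Ne.symm hy)
      rw [← mul_le_mul_iff_right₀ hpos, ← mul_assoc, mul_inv_cancel₀ hy, one_mul] at hkey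
      linarith [hkey]
    have hfsum : f (y + α • T y) = ‖y‖ + α * f (T y) := by
      rw [map_add, map_smul, hfyr, smul_eq_mul]
    have h2 : f (y + α • T y) ≤ ‖y + α • T y‖ := by
      calc f (y + α • T y) ≤ |f (y + α • T y)| := le_abs_self _
        _ = ‖f (y + α • T y)‖ := (Real.norm_eq_abs _).symm
        _ ≤ ‖f‖ * ‖y + α • T y‖ := f.le_opNorm _
        _ = ‖y + α • T y‖ := by rw [hf1, one_mul]
    have h3 : -|f (T y)| ≤ f (T y) := neg_abs_le _
    nlinarith [mul_le_mul_of_nonneg_left hTy hα]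

lemma nradius_coord (T : E →L[ℝ] E) {α : ℝ} (hα : 0 ≤ α) (x : E) :
    (1 - α * nradius T) * ‖x + α • T x‖ ≤ (1 + α ^ 2 * ‖T‖ ^ 2) * ‖x‖ := by
  have h1 := nradius_lower (-T) hα (x + α • T x)
  rw [nradius_neg] at h1
  have halg : (x + α • T x) + α • (-T) (x + α • T x) = x - (α * α) • T (T x) := by
    simp only [ContinuousLinearMap.neg_apply, map_add, map_smul, smul_neg, smul_add, smul_smul]
    abel
  rw [halg] at h1
  have h2 : ‖x - (α * α) • T (T x)‖ ≤ ‖x‖ + α ^ 2 * ‖T‖ ^ 2 * ‖x‖ := by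
    calc ‖x - (α * α) • T (T x)‖ ≤ ‖x‖ + ‖(α * α) • T (T x)‖ := norm_sub_le _ _
      _ = ‖x‖ + α * α * ‖T (T x)‖ := by
          rw [norm_smul, Real.norm_eq_abs, abs_of_nonneg (mul_nonneg hα hα)]
      _ ≤ ‖x‖ + α ^ 2 * ‖T‖ ^ 2 * ‖x‖ := by
          have : ‖T (T x)‖ ≤ ‖T‖ ^ 2 * ‖x‖ := by
            calc ‖T (T x)‖ ≤ ‖T‖ * ‖T x‖ := T.le_opNorm _
              _ ≤ ‖T‖ * (‖T‖ * ‖x‖) := mul_le_mul_of_nonneg_left (T.le_opNorm _) (norm_nonneg _)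
              _ = ‖T‖ ^ 2 * ‖x‖ := by ring
          nlinarith [mul_nonneg hα hα]
  calc (1 - α * nradius T) * ‖x + α • T x‖ ≤ ‖x - (α * α) • T (T x)‖ := h1
    _ ≤ ‖x‖ + α ^ 2 * ‖T‖ ^ 2 * ‖x‖ := h2
    _ = (1 + α ^ 2 * ‖T‖ ^ 2) * ‖x‖ := by ring

end Aux2
open Filter Metric ENNReal

section Ultra

variable (X : ℕ → Type*) [∀ n, NormedAddCommGroup (X n)] [∀ n, NormedSpace ℝ (X n)]
  (U : Ultrafilter ℕ)

lemma norm_mk_le_of_ae (z : lp X ∞) {c : ℝ} (hc : 0 ≤ c)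
    (hz : ∀ᶠ n in (U : Filter ℕ), ‖z n‖ ≤ c) :
    ‖(Submodule.Quotient.mk z : lp X ∞ ⧸ nullIdeal X U)‖ ≤ c := by
  classical
  have hmem : Memℓp (fun n => if ‖z n‖ ≤ c then z n else 0) ∞ := by
    apply memℓp_infty
    refine ⟨c, ?_⟩
    rintro - ⟨n, rfl⟩
    dsimp only
    split <;> simp_all
  set z' : lp X ∞ := ⟨fun n => if ‖z n‖ ≤ c then z n else 0, hmem⟩ with hz'def
  have hz'app : ∀ n, z' n = if ‖z n‖ ≤ c then z n else 0 := fun n => rfl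
  have hz' : ∀ n, ‖z' n‖ ≤ c := by
    intro n
    rw [hz'app]
    split <;> simp_all
  have hsub : z - z' ∈ nullIdeal X U := by
    show Tendsto (fun n => ‖(z - z') n‖) (U : Filter ℕ) (nhds 0)
    have hev : (fun _ : ℕ => (0 : ℝ)) =ᶠ[(U : Filter ℕ)] fun n => ‖(z - z') n‖ := by
      refine hz.mono fun n hn => ?_
      have h1 : (z - z') n = z n - z' n := by rw [lp.coeFn_sub]; rfl
      show (0:ℝ) = ‖(z - z') n‖
      rw [h1, hz'app, if_pos hn, sub_self, norm_zero]
    exact Tendsto.congr' hev tendsto_const_nhds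
  have hmk : (Submodule.Quotient.mk z : lp X ∞ ⧸ nullIdeal X U) = Submodule.Quotient.mk z' :=
    (Submodule.Quotient.eq _).2 hsub
  rw [hmk]
  exact (Submodule.Quotient.norm_mk_le _ _).trans (lp.norm_le_of_forall_le hc hz')

end Ultra

section AuxLe

variable (X : ℕ → Type*) [∀ n, NormedAddCommGroup (X n)] [∀ n, NormedSpace ℝ (X n)]
  (U : Ultrafilter ℕ)

lemma aux_le
    (T : ∀ n, X n →L[ℝ] X n) (M : ℝ) (hM : ∀ n, ‖T n‖ ≤ M)
    (Tq : (lp X ∞ ⧸ nullIdeal X U) →L[ℝ] (lp X ∞ ⧸ nullIdeal X U))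
    (hTq : ∀ g h : lp X ∞, (∀ n, h n = T n (g n)) →
      Tq (Submodule.Quotient.mk g) = Submodule.Quotient.mk h)
    (L : ℝ) (hL : Tendsto (fun n => nradius (T n)) (U : Filter ℕ) (nhds L))
    (x : lp X ∞ ⧸ nullIdeal X U) (F : (lp X ∞ ⧸ nullIdeal X U) →L[ℝ] ℝ)
    (hx : ‖x‖ = 1) (hF : ‖F‖ = 1) (hFx : F x = 1) :
    F (Tq x) ≤ L := by
  have hM0 : 0 ≤ M := le_trans (norm_nonneg (T 0)) (hM 0)
  refine le_of_forall_pos_le_add ?_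
  intro ε hε
  -- core estimate
  have core : ∀ α : ℝ, 0 < α → α * (L + ε) < 1 →
      F (Tq x) ≤ ((L + ε) + α * (1 + M ^ 2) + α ^ 3 * M ^ 2) / (1 - α * (L + ε)) := by
    intro α hα hα1
    have hden : 0 < 1 - α * (L + ε) := by linarith
    have hα2 : (0 : ℝ) < α ^ 2 := by positivity
    obtain ⟨g, hg, hgnorm⟩ := Submodule.Quotient.norm_mk_lt x hα2
    rw [hx] at hgnorm
    have hmemh : Memℓp (fun n => T n (g n)) ∞ := by
      apply memℓp_infty
      refine ⟨M * ‖g‖, ?_⟩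
      rintro - ⟨n, rfl⟩
      dsimp only
      calc ‖T n (g n)‖ ≤ ‖T n‖ * ‖g n‖ := (T n).le_opNorm _
        _ ≤ M * ‖g‖ := mul_le_mul (hM n) (lp.norm_apply_le_norm ENNReal.top_ne_zero g n)
            (norm_nonneg _) hM0
    set h : lp X ∞ := ⟨fun n => T n (g n), hmemh⟩ with hhdef
    have hh : ∀ n, h n = T n (g n) := fun n => rfl
    have hTqg : Tq (Submodule.Quotient.mk g) = Submodule.Quotient.mk h := hTq g h hh
    set c : ℝ := (1 + α ^ 2 * M ^ 2) * (1 + α ^ 2) / (1 - α * (L + ε)) with hcdef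
    have hc0 : 0 ≤ c := by positivity
    have hev : ∀ᶠ n in (U : Filter ℕ), nradius (T n) < L + ε :=
      hL.eventually_lt_const (lt_add_of_pos_right _ hε)
    have hcoord : ∀ᶠ n in (U : Filter ℕ), ‖(g + α • h) n‖ ≤ c := by
      refine hev.mono fun n hn => ?_
      have happ : (g + α • h) n = g n + α • T n (g n) := by
        rw [lp.coeFn_add, lp.coeFn_smul]
        rfl
      have h1 := nradius_coord (T n) hα.le (g n)
      have hvpos : 0 < 1 - α * nradius (T n) := by
        have : α * nradius (T n) ≤ α * (L + ε) :=
          mul_le_mul_of_nonneg_left hn.le hα.le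
        linarith
      have hTn2 : ‖T n‖ ^ 2 ≤ M ^ 2 := by
        have := hM n
        nlinarith [norm_nonneg (T n)]
      have hgn : ‖g n‖ ≤ 1 + α ^ 2 :=
        (lp.norm_apply_le_norm ENNReal.top_ne_zero g n).trans hgnorm.le
      have h2 : (1 - α * (L + ε)) * ‖g n + α • T n (g n)‖ ≤ (1 + α ^ 2 * M ^ 2) * (1 + α ^ 2) := by
        calc (1 - α * (L + ε)) * ‖g n + α • T n (g n)‖
            ≤ (1 - α * nradius (T n)) * ‖g n + α • T n (g n)‖ := by
              apply mul_le_mul_of_nonneg_right _ (norm_nonneg _)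
              have : α * nradius (T n) ≤ α * (L + ε) :=
                mul_le_mul_of_nonneg_left hn.le hα.le
              linarith
          _ ≤ (1 + α ^ 2 * ‖T n‖ ^ 2) * ‖g n‖ := h1
          _ ≤ (1 + α ^ 2 * M ^ 2) * (1 + α ^ 2) := by
              apply mul_le_mul _ hgn (norm_nonneg _) (by positivity)
              nlinarith
      rw [happ, hcdef]
      rw [le_div_iff₀ hden]
      linarith [h2]
    have hnormle : ‖(Submodule.Quotient.mk (g + α • h) : lp X ∞ ⧸ nullIdeal X U)‖ ≤ c :=
      norm_mk_le_of_ae X U _ hc0 hcoord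
    have hmkadd : (Submodule.Quotient.mk (g + α • h) : lp X ∞ ⧸ nullIdeal X U)
        = x + α • Tq x := by
      rw [Submodule.Quotient.mk_add, Submodule.Quotient.mk_smul, hg, ← hTqg, hg]
    have hFval : F (x + α • Tq x) = 1 + α * F (Tq x) := by
      rw [map_add, map_smul, hFx, smul_eq_mul]
    have hFle : F (x + α • Tq x) ≤ c := by
      calc F (x + α • Tq x) ≤ |F (x + α • Tq x)| := le_abs_self _
        _ = ‖F (x + α • Tq x)‖ := (Real.norm_eq_abs _).symm
        _ ≤ ‖F‖ * ‖x + α • Tq x‖ := F.le_opNorm _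
        _ = ‖x + α • Tq x‖ := by rw [hF, one_mul]
        _ ≤ c := by rw [← hmkadd]; exact hnormle
    rw [hFval] at hFle
    have hFle2 : F (Tq x) ≤ (c - 1) / α := by
      rw [le_div_iff₀ hα]
      linarith
    refine hFle2.trans (le_of_eq ?_)
    rw [hcdef]
    field_simp
    ring
  -- limit as α → 0 along 1/(k+1)
  have h10 : Tendsto (fun k : ℕ => 1 / ((k : ℝ) + 1)) atTop (nhds 0) :=
    tendsto_one_div_add_atTop_nhds_zero_nat
  have hcont : ContinuousAt
      (fun t : ℝ => ((L + ε) + t * (1 + M ^ 2) + t ^ 3 * M ^ 2) / (1 - t * (L + ε))) 0 := by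
    apply ContinuousAt.div
    · fun_prop
    · fun_prop
    · norm_num
  have htend : Tendsto (fun k : ℕ =>
      ((L + ε) + (1 / ((k : ℝ) + 1)) * (1 + M ^ 2) + (1 / ((k : ℝ) + 1)) ^ 3 * M ^ 2)
        / (1 - (1 / ((k : ℝ) + 1)) * (L + ε))) atTop (nhds (L + ε)) := by
    have h := hcont.tendsto.comp h10
    simp only [Function.comp_def] at h
    convert h using 2 <;> norm_num
  have hsmall : ∀ᶠ k : ℕ in atTop, (1 / ((k : ℝ) + 1)) * (L + ε) < 1 := by
    have := (h10.mul_const (L + ε)).eventually_lt_const (by norm_num : (0 : ℝ) * (L + ε) < 1)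
    simpa using this
  have hbound : ∀ᶠ k : ℕ in atTop, F (Tq x) ≤
      ((L + ε) + (1 / ((k : ℝ) + 1)) * (1 + M ^ 2) + (1 / ((k : ℝ) + 1)) ^ 3 * M ^ 2)
        / (1 - (1 / ((k : ℝ) + 1)) * (L + ε)) := by
    refine hsmall.mono fun k hk => ?_
    exact core _ (by positivity) hk
  exact ge_of_tendsto htend hbound

end AuxLe


theorem ultraproduct_nradius_eq
    (X : ℕ → Type*) [∀ n, NormedAddCommGroup (X n)] [∀ n, NormedSpace ℝ (X n)]
    [∀ n, CompleteSpace (X n)]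
    (U : Ultrafilter ℕ) (hU : (U : Filter ℕ) ≤ Filter.cofinite)
    (T : ∀ n, X n →L[ℝ] X n) (M : ℝ) (hM : ∀ n, ‖T n‖ ≤ M)
    (Tq : (lp X ∞ ⧸ nullIdeal X U) →L[ℝ] (lp X ∞ ⧸ nullIdeal X U))
    (hTq : ∀ g h : lp X ∞, (∀ n, h n = T n (g n)) →
      Tq (Submodule.Quotient.mk g) = Submodule.Quotient.mk h)
    (L : ℝ) (hL : Tendsto (fun n => nradius (T n)) (U : Filter ℕ) (nhds L)) :
    nradius Tq = L := by
  have hM0 : 0 ≤ M := le_trans (norm_nonneg (T 0)) (hM 0)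
  have hL0 : 0 ≤ L := ge_of_tendsto' hL fun n => nradius_nonneg _
  refine le_antisymm ?_ ?_
  · -- upper bound : nradius Tq ≤ L
    apply Real.sSup_le _ hL0
    rintro r ⟨x, F, hx, hF, hFx, rfl⟩
    rw [abs_le]
    constructor
    · -- -L ≤ F (Tq x)
      have hTqneg : ∀ g h : lp X ∞, (∀ n, h n = (fun n => -(T n)) n (g n)) →
          (-Tq) (Submodule.Quotient.mk g) = Submodule.Quotient.mk h := by
        intro g h hh
        have hh' : ∀ n, (-h) n = T n (g n) := by
          intro n
          have h1 : (-h) n = -(h n) := by rw [lp.coeFn_neg]; rfl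
          rw [h1, hh n]
          simp
        have h2 := hTq g (-h) hh'
        have h3 : (Submodule.Quotient.mk (-h) : lp X ∞ ⧸ nullIdeal X U)
            = -Submodule.Quotient.mk h := by
          rw [← Submodule.Quotient.mk_neg]
        rw [ContinuousLinearMap.neg_apply, h2, h3, neg_neg]
      have hLneg : Tendsto (fun n => nradius ((fun n => -(T n)) n)) (U : Filter ℕ) (nhds L) := by
        simpa only [nradius_neg] using hL
      have hneg := aux_le X U (fun n => -(T n)) M (fun n => by rw [norm_neg]; exact hM n)
        (-Tq) hTqneg L hLneg x F hx hF hFx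
      rw [ContinuousLinearMap.neg_apply, map_neg] at hneg
      linarith
    · exact aux_le X U T M hM Tq hTq L hL x F hx hF hFx
  · -- lower bound : L ≤ nradius Tq
    refine le_of_forall_pos_le_add ?_
    intro ε hε
    have hq0 : 0 ≤ nradius Tq := nradius_nonneg _
    rcases le_or_gt L ε with hcase | hcase
    · linarith
    have hLε : 0 < L - ε := by linarith
    have hev : ∀ᶠ n in (U : Filter ℕ), L - ε < nradius (T n) :=
      hL.eventually_const_lt (by linarith)
    have H : ∀ n, ∃ (xx : X n) (f : X n →L[ℝ] ℝ), ‖xx‖ ≤ 1 ∧ ‖f‖ ≤ 1 ∧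
        (L - ε < nradius (T n) → ‖xx‖ = 1 ∧ f xx = 1 ∧ L - ε < |f (T n xx)|) := by
      intro n
      by_cases hn : L - ε < nradius (T n)
      · have hex : ∃ r ∈ {r : ℝ | ∃ (x : X n) (f : X n →L[ℝ] ℝ),
            ‖x‖ = 1 ∧ ‖f‖ = 1 ∧ f x = 1 ∧ r = |f (T n x)|}, L - ε < r := by
          by_contra hcon
          push_neg at hcon
          have hle : nradius (T n) ≤ L - ε := Real.sSup_le hcon hLε.le
          exact absurd hle (not_le.2 hn)
        obtain ⟨r, ⟨xx, f, hx1, hf1, hfx, rfl⟩, hrgt⟩ := hex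
        exact ⟨xx, f, le_of_eq hx1, le_of_eq hf1, fun _ => ⟨hx1, hfx, hrgt⟩⟩
      · exact ⟨0, 0, by simp, by simp, fun hc => absurd hc hn⟩
    choose xx ff h1 h2 h3 using H
    have hmemg : Memℓp (fun n => xx n) ∞ :=
      memℓp_infty ⟨1, by rintro - ⟨n, rfl⟩; exact h1 n⟩
    set g : lp X ∞ := ⟨fun n => xx n, hmemg⟩ with hgdef
    have hgapp : ∀ n, g n = xx n := fun n => rfl
    have hmemh : Memℓp (fun n => T n (xx n)) ∞ := by
      apply memℓp_infty
      refine ⟨M, ?_⟩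
      rintro - ⟨n, rfl⟩
      dsimp only
      calc ‖T n (xx n)‖ ≤ ‖T n‖ * ‖xx n‖ := (T n).le_opNorm _
        _ ≤ M * 1 := mul_le_mul (hM n) (h1 n) (norm_nonneg _) hM0
        _ = M := mul_one M
    set h : lp X ∞ := ⟨fun n => T n (xx n), hmemh⟩ with hhdef
    have hhapp : ∀ n, h n = T n (xx n) := fun n => rfl
    -- ultrafilter limits
    have hfbd : ∀ (z : lp X ∞) (n : ℕ), |ff n (z n)| ≤ ‖z‖ := by
      intro z n
      calc |ff n (z n)| = ‖ff n (z n)‖ := (Real.norm_eq_abs _).symm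
        _ ≤ ‖ff n‖ * ‖z n‖ := (ff n).le_opNorm _
        _ ≤ 1 * ‖z‖ := mul_le_mul (h2 n) (lp.norm_apply_le_norm ENNReal.top_ne_zero z n)
            (norm_nonneg _) zero_le_one
        _ = ‖z‖ := one_mul _
    have hlim : ∀ z : lp X ∞, ∃ clim : ℝ,
        Tendsto (fun n => ff n (z n)) (U : Filter ℕ) (nhds clim) := by
      intro z
      have hbd : ∀ n, ff n (z n) ∈ Set.Icc (-‖z‖) ‖z‖ := fun n => abs_le.1 (hfbd z n)
      have hle : ↑(Ultrafilter.map (fun n => ff n (z n)) U)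
          ≤ Filter.principal (Set.Icc (-‖z‖) ‖z‖) := by
        rw [Ultrafilter.coe_map, Filter.le_principal_iff, Filter.mem_map]
        exact Filter.univ_mem' hbd
      obtain ⟨clim, _, hclim⟩ := isCompact_Icc.ultrafilter_le_nhds _ hle
      rw [Ultrafilter.coe_map] at hclim
      exact ⟨clim, hclim⟩
    choose φ hφ using hlim
    have hadd : ∀ a b : lp X ∞, φ (a + b) = φ a + φ b := by
      intro a b
      refine tendsto_nhds_unique (hφ (a + b)) ?_
      refine ((hφ a).add (hφ b)).congr fun n => ?_
      have : (a + b) n = a n + b n := by rw [lp.coeFn_add]; rfl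
      rw [this, map_add]
    have hsmul : ∀ (r : ℝ) (a : lp X ∞), φ (r • a) = r * φ a := by
      intro r a
      refine tendsto_nhds_unique (hφ (r • a)) ?_
      refine ((hφ a).const_mul r).congr fun n => ?_
      have : (r • a) n = r • a n := by rw [lp.coeFn_smul]; rfl
      rw [this, map_smul, smul_eq_mul]
    set φL : lp X ∞ →ₗ[ℝ] ℝ :=
      { toFun := φ, map_add' := hadd, map_smul' := hsmul } with hφLdef
    have hker : nullIdeal X U ≤ LinearMap.ker φL := by
      intro z hz
      have hz' : Tendsto (fun n => ‖z n‖) (U : Filter ℕ) (nhds 0) := hz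
      have h0 : Tendsto (fun n => ff n (z n)) (U : Filter ℕ) (nhds 0) := by
        refine squeeze_zero_norm (fun n => ?_) hz'
        calc ‖ff n (z n)‖ ≤ ‖ff n‖ * ‖z n‖ := (ff n).le_opNorm _
          _ ≤ 1 * ‖z n‖ := mul_le_mul_of_nonneg_right (h2 n) (norm_nonneg _)
          _ = ‖z n‖ := one_mul _
      exact LinearMap.mem_ker.2 (tendsto_nhds_unique (hφ z) h0)
    set F₀ : (lp X ∞ ⧸ nullIdeal X U) →ₗ[ℝ] ℝ := (nullIdeal X U).liftQ φL hker with hF₀def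
    have hF₀app : ∀ z : lp X ∞, F₀ (Submodule.Quotient.mk z) = φ z := fun z =>
      Submodule.liftQ_apply _ _ z
    have hφbound : ∀ z : lp X ∞, |φ z| ≤ ‖z‖ := fun z =>
      le_of_tendsto' (hφ z).abs (hfbd z)
    have hFbound : ∀ q : lp X ∞ ⧸ nullIdeal X U, ‖F₀ q‖ ≤ 1 * ‖q‖ := by
      intro q
      rw [one_mul, Real.norm_eq_abs]
      refine le_of_forall_pos_le_add ?_
      intro δ hδ
      obtain ⟨z, hzq, hzn⟩ := Submodule.Quotient.norm_mk_lt q hδ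
      calc |F₀ q| = |φ z| := by rw [← hzq, hF₀app]
        _ ≤ ‖z‖ := hφbound z
        _ ≤ ‖q‖ + δ := hzn.le
    set F : (lp X ∞ ⧸ nullIdeal X U) →L[ℝ] ℝ := F₀.mkContinuous 1 hFbound with hFdef
    have hFapp : ∀ z : lp X ∞, F (Submodule.Quotient.mk z) = φ z := fun z => hF₀app z
    have hFnorm_le : ‖F‖ ≤ 1 := LinearMap.mkContinuous_norm_le _ zero_le_one _
    have hgx : φ g = 1 := by
      refine tendsto_nhds_unique (hφ g) ?_
      have hev1 : (fun _ : ℕ => (1 : ℝ)) =ᶠ[(U : Filter ℕ)] fun n => ff n (g n) := by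
        refine hev.mono fun n hn => ?_
        exact ((h3 n hn).2.1).symm
      exact Tendsto.congr' hev1 tendsto_const_nhds
    have hFg : F (Submodule.Quotient.mk g) = 1 := by rw [hFapp]; exact hgx
    have hmkg_le : ‖(Submodule.Quotient.mk g : lp X ∞ ⧸ nullIdeal X U)‖ ≤ 1 :=
      norm_mk_le_of_ae X U g zero_le_one (Filter.Eventually.of_forall fun n => h1 n)
    have hmkg_ge : 1 ≤ ‖(Submodule.Quotient.mk g : lp X ∞ ⧸ nullIdeal X U)‖ := by
      have hle := F.le_opNorm (Submodule.Quotient.mk g)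
      rw [hFg] at hle
      have : ‖(1 : ℝ)‖ = 1 := norm_one
      rw [this] at hle
      calc (1 : ℝ) ≤ ‖F‖ * ‖(Submodule.Quotient.mk g : lp X ∞ ⧸ nullIdeal X U)‖ := hle
        _ ≤ 1 * ‖(Submodule.Quotient.mk g : lp X ∞ ⧸ nullIdeal X U)‖ :=
            mul_le_mul_of_nonneg_right hFnorm_le (norm_nonneg _)
        _ = _ := one_mul _
    have hmkg : ‖(Submodule.Quotient.mk g : lp X ∞ ⧸ nullIdeal X U)‖ = 1 :=
      le_antisymm hmkg_le hmkg_ge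
    have hFnorm : ‖F‖ = 1 := by
      refine le_antisymm hFnorm_le ?_
      have hle := F.le_opNorm (Submodule.Quotient.mk g)
      rw [hFg, hmkg, mul_one, norm_one] at hle
      exact hle
    have hTqg : Tq (Submodule.Quotient.mk g) = Submodule.Quotient.mk h :=
      hTq g h fun n => rfl
    have hφh : L - ε ≤ |φ h| := by
      refine ge_of_tendsto (hφ h).abs ?_
      refine hev.mono fun n hn => ?_
      exact (h3 n hn).2.2.le
    have hmem : |F (Tq (Submodule.Quotient.mk g))| ≤ nradius Tq :=
      abs_le_nradius Tq hmkg hFnorm hFg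
    rw [hTqg, hFapp] at hmem
    linarith
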